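/- Let A be a bimatroid on E × F. Define its transpose Aᵀ on F × E by declaring (J,I) a regular minor of Aᵀ iff (I,J) is a regular minor of A. Then Aᵀ is a bimatroid, and its extended matroid (on F ⊔ E) is isomorphic to the dual matroid of the extended matroid of A (on E ⊔ F) under the identification of F ⊔ E with E ⊔ F. -/

import Mathlib

/-- A bimatroid on `E × F`, given by its collection of regular minors
(pairs `(I, J)` with `I ⊆ E`, `J ⊆ F`, `|I| = |J|`), following Kung's axioms. -/
structure Bimatroid (E F : Type*) [DecidableEq E] [DecidableEq F] where
  Reg : Finset E → Finset F → Prop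
  card_eq : ∀ I J, Reg I J → I.card = J.card
  reg_empty : Reg ∅ ∅
  exch_row : ∀ I J I' J', Reg I J → Reg I' J' → ∀ i' ∈ I' \ I,
    (∃ i ∈ I \ I', Reg (insert i' (I.erase i)) J) ∨
    (∃ j' ∈ J' \ J, Reg (insert i' I) (insert j' J))
  exch_col : ∀ I J I' J', Reg I J → Reg I' J' → ∀ j ∈ J \ J',
    (∃ j' ∈ J' \ J, Reg I (insert j' (J.erase j))) ∨
    (∃ i ∈ I \ I', Reg (I.erase i) (J.erase j))

open Finset

namespace TransposeAux

/-- Co-exchange from exchange, via Mathlib's matroid duality. -/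
lemma coexchange {α : Type*} [Finite α] {P : Set α → Prop}
    (hne : ∃ B, P B) (hP : Matroid.ExchangeProperty P) :
    ∀ X Y, P X → P Y → ∀ b ∈ Y \ X, ∃ a ∈ X \ Y, P (insert b (X \ {a})) := by
  intro X Y hX hY b hb
  set M := Matroid.ofIsBaseOfFinite Set.finite_univ P hne hP (fun B _ => Set.subset_univ B)
    with hM
  have hbase : ∀ S, M.IsBase S ↔ P S := fun S => by
    rw [hM, Matroid.ofIsBaseOfFinite_isBase]
  have hground : M.E = Set.univ := rfl
  have compl_base : ∀ S : Set α, P S → M✶.IsBase Sᶜ := by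
    intro S hS
    rw [Matroid.dual_isBase_iff (by rw [hground]; exact Set.subset_univ _), hground,
      ← Set.compl_eq_univ_diff, compl_compl, hbase]
    exact hS
  have hX' := compl_base X hX
  have hY' := compl_base Y hY
  have hb' : b ∈ Xᶜ \ Yᶜ := ⟨hb.2, fun h => h hb.1⟩
  obtain ⟨a, ha, hB2⟩ := hX'.exchange hY' hb'
  have haX : a ∈ X := by simpa using ha.2
  have haY : a ∉ Y := ha.1
  refine ⟨a, ⟨haX, haY⟩, ?_⟩
  have h3 := (Matroid.dual_isBase_iff (by rw [hground]; exact Set.subset_univ _)).1 hB2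
  rw [hground, hbase] at h3
  have heq : Set.univ \ (insert a (Xᶜ \ {b})) = insert b (X \ {a}) := by
    have hab : b ≠ a := fun h => (h ▸ hb.2) haX
    ext x
    simp only [Set.mem_diff, Set.mem_univ, true_and, Set.mem_insert_iff,
      Set.mem_compl_iff, Set.mem_singleton_iff]
    have hbX : b ∉ X := hb.2
    constructor
    · intro h; tauto
    · rintro (rfl | ⟨hx, hxa⟩) <;> tauto
  rwa [heq] at h3


variable {E F : Type*} [Fintype E] [Fintype F] [DecidableEq E] [DecidableEq F]

/-- The finset of the extended-matroid basis associated to a regular minor `(I, J)`. -/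
def bf (I : Finset E) (J : Finset F) : Finset (E ⊕ F) :=
  Iᶜ.image Sum.inl ∪ J.image Sum.inr

@[simp] lemma mem_bf_inl {I : Finset E} {J : Finset F} {e : E} :
    Sum.inl e ∈ bf I J ↔ e ∉ I := by simp [bf]

@[simp] lemma mem_bf_inr {I : Finset E} {J : Finset F} {f : F} :
    Sum.inr f ∈ bf I J ↔ f ∈ J := by simp [bf]

lemma bf_inj {I I' : Finset E} {J J' : Finset F} (h : bf I J = bf I' J') :
    I = I' ∧ J = J' := by
  constructor
  · ext e
    have := Finset.ext_iff.1 h (Sum.inl e)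
    simp only [mem_bf_inl] at this
    exact not_iff_not.mp this
  · ext f
    have := Finset.ext_iff.1 h (Sum.inr f)
    simpa using this

lemma swap1 {I : Finset E} {J : Finset F} {i i' : E} (hi : i ∈ I) (hi' : i' ∉ I) :
    insert (Sum.inl i : E ⊕ F) ((bf I J).erase (Sum.inl i')) = bf (insert i' (I.erase i)) J := by
  have hii' : i ≠ i' := fun h => hi' (h ▸ hi)
  unfold bf
  ext x
  rcases x with e | f
  · simp only [Finset.mem_insert, Finset.mem_erase, Finset.mem_union, Finset.mem_image,
      Finset.mem_compl, Sum.inl.injEq, Sum.inr.injEq, reduceCtorEq, ne_eq,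
      exists_eq_right, and_false, exists_false, or_false]
    by_cases he : e = i
    · subst he; simp [hii', hi, hi']
    · simp only [he, false_or]
      constructor
      · rintro ⟨h1, h2⟩
        simp [Finset.mem_insert, Finset.mem_erase, h1, h2, he]
      · intro h
        simp only [Finset.mem_insert, Finset.mem_erase, not_or, not_and, not_not] at h
        tauto
  · simp

lemma swap2 {I : Finset E} {J : Finset F} {i' : E} {j' : F} :
    insert (Sum.inr j' : E ⊕ F) ((bf I J).erase (Sum.inl i')) = bf (insert i' I) (insert j' J) := by
  ext x
  rcases x with e | f <;>
    simp only [Finset.mem_insert, Finset.mem_erase, mem_bf_inl, mem_bf_inr,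
      Sum.inl.injEq, Sum.inr.injEq, reduceCtorEq, ne_eq, false_or, not_or] <;> tauto

lemma swap3 {I : Finset E} {J : Finset F} {j j' : F} :
    insert (Sum.inr j' : E ⊕ F) ((bf I J).erase (Sum.inr j)) = bf I (insert j' (J.erase j)) := by
  ext x
  rcases x with e | f <;>
    simp only [Finset.mem_insert, Finset.mem_erase, mem_bf_inl, mem_bf_inr,
      Sum.inl.injEq, Sum.inr.injEq, reduceCtorEq, ne_eq, false_or] <;> tauto

lemma swap4 {I : Finset E} {J : Finset F} {i : E} {j : F} :
    insert (Sum.inl i : E ⊕ F) ((bf I J).erase (Sum.inr j)) = bf (I.erase i) (J.erase j) := by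
  ext x
  rcases x with e | f <;>
    simp only [Finset.mem_insert, Finset.mem_erase, mem_bf_inl, mem_bf_inr,
      Sum.inl.injEq, Sum.inr.injEq, reduceCtorEq, ne_eq, false_or, not_and, not_not] <;> tauto


lemma bases_exchange (A : Bimatroid E F) :
    Matroid.ExchangeProperty (fun S : Set (E ⊕ F) => ∃ I J, A.Reg I J ∧ S = ↑(bf I J)) := by
  rintro _ _ ⟨I, J, hIJ, rfl⟩ ⟨I', J', hI'J', rfl⟩ a ha
  rw [Set.mem_diff, Finset.mem_coe, Finset.mem_coe] at ha
  obtain ⟨ha1, ha2⟩ := ha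
  rcases a with i' | j
  · rw [mem_bf_inl] at ha1
    rw [mem_bf_inl, not_not] at ha2
    rcases A.exch_row I J I' J' hIJ hI'J' i' (Finset.mem_sdiff.2 ⟨ha2, ha1⟩) with
      ⟨i, hi, hreg⟩ | ⟨j', hj', hreg⟩
    · rw [Finset.mem_sdiff] at hi
      refine ⟨Sum.inl i, ⟨by simp [hi.2], by simp [hi.1]⟩, _, _, hreg, ?_⟩
      rw [← swap1 hi.1 ha1, Finset.coe_insert, Finset.coe_erase]
    · rw [Finset.mem_sdiff] at hj'
      refine ⟨Sum.inr j', ⟨by simp [hj'.1], by simp [hj'.2]⟩, _, _, hreg, ?_⟩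
      rw [← swap2, Finset.coe_insert, Finset.coe_erase]
  · rw [mem_bf_inr] at ha1
    rw [mem_bf_inr] at ha2
    rcases A.exch_col I J I' J' hIJ hI'J' j (Finset.mem_sdiff.2 ⟨ha1, ha2⟩) with
      ⟨j', hj', hreg⟩ | ⟨i, hi, hreg⟩
    · rw [Finset.mem_sdiff] at hj'
      refine ⟨Sum.inr j', ⟨by simp [hj'.1], by simp [hj'.2]⟩, _, _, hreg, ?_⟩
      rw [← swap3, Finset.coe_insert, Finset.coe_erase]
    · rw [Finset.mem_sdiff] at hi
      refine ⟨Sum.inl i, ⟨by simp [hi.2], by simp [hi.1]⟩, _, _, hreg, ?_⟩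
      rw [← swap4, Finset.coe_insert, Finset.coe_erase]

lemma key (A : Bimatroid E F) {I I' : Finset E} {J J' : Finset F}
    (hIJ : A.Reg I J) (hI'J' : A.Reg I' J') {b : E ⊕ F}
    (hb : b ∈ bf I' J' \ bf I J) :
    ∃ a ∈ bf I J \ bf I' J', ∃ I₂ J₂, A.Reg I₂ J₂ ∧
      insert b ((bf I J).erase a) = bf I₂ J₂ := by
  rw [Finset.mem_sdiff] at hb
  obtain ⟨a, haMem, I₂, J₂, hreg, heq⟩ :=
    coexchange (P := fun S : Set (E ⊕ F) => ∃ I J, A.Reg I J ∧ S = ↑(bf I J))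
      ⟨↑(bf I J), I, J, hIJ, rfl⟩ (bases_exchange A) ↑(bf I J) ↑(bf I' J')
      ⟨I, J, hIJ, rfl⟩ ⟨I', J', hI'J', rfl⟩ b ⟨hb.1, fun h => hb.2 h⟩
  refine ⟨a, Finset.mem_sdiff.2 ⟨haMem.1, fun h => haMem.2 h⟩, I₂, J₂, hreg, ?_⟩
  apply Finset.coe_injective
  rw [Finset.coe_insert, Finset.coe_erase, heq]

lemma image_bf {I : Finset E} {J : Finset F} :
    (bf J I).image ⇑(Equiv.sumComm F E) = (bf I J)ᶜ := by
  ext x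
  rw [Finset.mem_image]
  constructor
  · rintro ⟨y, hy, rfl⟩
    rcases y with f | e
    · simp only [mem_bf_inl] at hy
      simp [hy]
    · simp only [mem_bf_inr] at hy
      simp [hy]
  · intro hx
    rcases x with e | f
    · simp only [Finset.mem_compl, mem_bf_inl, not_not] at hx
      exact ⟨Sum.inr e, by simp [hx]⟩
    · simp only [Finset.mem_compl, mem_bf_inr] at hx
      exact ⟨Sum.inl f, by simp [hx]⟩

end TransposeAux

open TransposeAux in
/-- The transpose of a bimatroid `A` (with `(J, I)` regular iff `(I, J)` is regular in `A`)
is a bimatroid, and its extended matroid on `F ⊔ E` is the dual of the extended matroid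
of `A` on `E ⊔ F` under the canonical identification `F ⊔ E ≅ E ⊔ F`: its bases are
exactly the sets whose image under the identification is the complement of a basis. -/
theorem transpose_bimatroid {E F : Type*} [Fintype E] [Fintype F]
    [DecidableEq E] [DecidableEq F] (A : Bimatroid E F) :
    ∃ B : Bimatroid F E,
      (∀ J I, B.Reg J I ↔ A.Reg I J) ∧
      (∀ S : Finset (F ⊕ E),
        (∃ J I, B.Reg J I ∧ S = Jᶜ.image Sum.inl ∪ I.image Sum.inr) ↔
        (∃ I J, A.Reg I J ∧
          S.image (Equiv.sumComm F E) = (Iᶜ.image Sum.inl ∪ J.image Sum.inr)ᶜ)) := by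
  classical
  refine ⟨{ Reg := fun J I => A.Reg I J
            card_eq := fun J I h => (A.card_eq I J h).symm
            reg_empty := A.reg_empty
            exch_row := ?_
            exch_col := ?_ }, fun J I => Iff.rfl, ?_⟩
  · intro J I J' I' hJI hJ'I' j' hj'
    rw [Finset.mem_sdiff] at hj'
    obtain ⟨a, ha, I₂, J₂, hreg, heq⟩ := key A hJI hJ'I' (b := Sum.inr j')
      (by rw [Finset.mem_sdiff, mem_bf_inr, mem_bf_inr]; exact hj')
    rw [Finset.mem_sdiff] at ha
    rcases a with i' | j
    · right
      have h1 : i' ∉ I := mem_bf_inl.1 ha.1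
      have h2 : i' ∈ I' := by simpa using ha.2
      rw [swap2] at heq
      obtain ⟨hI2, hJ2⟩ := bf_inj heq
      rw [← hI2, ← hJ2] at hreg
      exact ⟨i', Finset.mem_sdiff.2 ⟨h2, h1⟩, hreg⟩
    · left
      have h1 : j ∈ J := mem_bf_inr.1 ha.1
      have h2 : j ∉ J' := by simpa using ha.2
      rw [swap3] at heq
      obtain ⟨hI2, hJ2⟩ := bf_inj heq
      rw [← hI2, ← hJ2] at hreg
      exact ⟨j, Finset.mem_sdiff.2 ⟨h1, h2⟩, hreg⟩
  · intro J I J' I' hJI hJ'I' i hi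
    rw [Finset.mem_sdiff] at hi
    obtain ⟨a, ha, I₂, J₂, hreg, heq⟩ := key A hJI hJ'I' (b := Sum.inl i)
      (by rw [Finset.mem_sdiff, mem_bf_inl, mem_bf_inl, not_not]; exact ⟨hi.2, hi.1⟩)
    rw [Finset.mem_sdiff] at ha
    rcases a with i' | j
    · left
      have h1 : i' ∉ I := mem_bf_inl.1 ha.1
      have h2 : i' ∈ I' := by simpa using ha.2
      rw [swap1 hi.1 h1] at heq
      obtain ⟨hI2, hJ2⟩ := bf_inj heq
      rw [← hI2, ← hJ2] at hreg
      exact ⟨i', Finset.mem_sdiff.2 ⟨h2, h1⟩, hreg⟩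
    · right
      have h1 : j ∈ J := mem_bf_inr.1 ha.1
      have h2 : j ∉ J' := by simpa using ha.2
      rw [swap4] at heq
      obtain ⟨hI2, hJ2⟩ := bf_inj heq
      rw [← hI2, ← hJ2] at hreg
      exact ⟨j, Finset.mem_sdiff.2 ⟨h1, h2⟩, hreg⟩
  · intro S
    constructor
    · rintro ⟨J, I, hreg, rfl⟩
      exact ⟨I, J, hreg, image_bf⟩
    · rintro ⟨I, J, hreg, heq⟩
      refine ⟨J, I, hreg, ?_⟩
      have h2 : S.image ⇑(Equiv.sumComm F E) = (bf J I).image ⇑(Equiv.sumComm F E) := by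
        rw [heq]; exact image_bf.symm
      exact Finset.image_injective (Equiv.injective _) h2
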